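/- Every tame valued field is algebraically maximal, and every separably tame valued field is separable-algebraically maximal. -/

import Mathlib

section Defs

variable {F : Type*} [Field F]

/-- x is algebraic over the subfield M. -/
def AlgOver (M : Subfield F) (x : F) : Prop :=
  ∃ f : Polynomial F, f ≠ 0 ∧ (∀ i, f.coeff i ∈ M) ∧ Polynomial.eval x f = 0

/-- x is separable algebraic over the subfield M. -/
def SepAlgOver (M : Subfield F) (x : F) : Prop :=
  ∃ f : Polynomial F, f ≠ 0 ∧ (∀ i, f.coeff i ∈ M) ∧ f.Separable ∧ Polynomial.eval x f = 0

/-- The degree [B : A] of an extension of subfields. -/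
noncomputable def sdeg {A B : Subfield F} (h : A ≤ B) : ℕ :=
  letI := (Subfield.inclusion h).toAlgebra
  Module.finrank A B

/-- The extension of subfields A ≤ B is finite. -/
def FinExt {A B : Subfield F} (h : A ≤ B) : Prop :=
  letI := (Subfield.inclusion h).toAlgebra
  Module.Finite A B

/-- A subfield M of F is henselian with respect to the valuation ring O of F. -/
def IsHenselianS (O : ValuationSubring F) (M : Subfield F) : Prop :=
  HenselianLocalRing (O.comap M.subtype)

/-- The residue field of the subfield M with respect to the valuation ring O. -/
noncomputable def resSubfield (O : ValuationSubring F) (M : Subfield F) :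
    Subfield (IsLocalRing.ResidueField O) :=
  Subfield.closure (IsLocalRing.residue O '' {a : O | (a : F) ∈ M})

/-- The value group of the subfield M with respect to the valuation ring O. -/
noncomputable def vgrp (O : ValuationSubring F) (M : Subfield F) : Subgroup (Fˣ ⧸ O.unitGroup) :=
  Subgroup.map (QuotientGroup.mk' O.unitGroup)
    (MonoidHom.range (Units.map (M.subtype.toMonoidHom)))

/-- (E|K) is a tame extension with respect to the valuation ring O: (TE1)-(TE3) hold
for all finite subextensions. -/
def TameExt (O : ValuationSubring F) (K E : Subfield F) : Prop :=
  K ≤ E ∧ ∀ (E' : Subfield F) (hKE' : K ≤ E'), E' ≤ E → FinExt hKE' →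
    ∃ hres : resSubfield O K ≤ resSubfield O E',
      (∀ q : ℕ, q.Prime → (q : IsLocalRing.ResidueField O) = 0 →
        ¬ q ∣ (vgrp O K).relIndex (vgrp O E')) ∧
      (∀ ξ, ξ ∈ resSubfield O E' → SepAlgOver (resSubfield O K) ξ) ∧
      sdeg hKE' = (vgrp O K).relIndex (vgrp O E') * sdeg hres

/-- (M|K) is an immediate extension with respect to the valuation ring O. -/
def IsImmediateV (O : ValuationSubring F) (K M : Subfield F) : Prop :=
  (∀ x ∈ M, x ≠ 0 → ∃ y ∈ K, y ≠ 0 ∧ x * y⁻¹ ∈ O ∧ y * x⁻¹ ∈ O) ∧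
  (∀ x ∈ M, x ∈ O → ∃ y ∈ K, (x - y) ∈ O ∧ (x - y ≠ 0 → (x - y)⁻¹ ∉ O))

end Defs


section Aux15
variable {Ω : Type*} [Field Ω]

lemma sdeg_eq_one' {A B : Subfield Ω} (h : A ≤ B) (h' : B ≤ A) : sdeg h = 1 := by
  letI := (Subfield.inclusion h).toAlgebra
  show Module.finrank A B = 1
  haveI : NoZeroSMulDivisors A B := by
    refine ⟨fun {c v} hcv => ?_⟩
    rw [Algebra.smul_def] at hcv
    rcases mul_eq_zero.mp hcv with h0 | h0
    · exact Or.inl ((map_eq_zero (algebraMap A B)).mp h0)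
    · exact Or.inr h0
  refine finrank_eq_one (1 : B) one_ne_zero fun w => ⟨⟨w.1, h' w.2⟩, Subtype.ext ?_⟩
  rw [Algebra.smul_def, mul_one]
  rfl

lemma isIntegral_of_algOver {K : Subfield Ω} {x : Ω} (h : AlgOver K x) :
    IsIntegral K x := by
  obtain ⟨f, hf0, hfc, hfe⟩ := h
  rw [← isAlgebraic_iff_isIntegral]
  set p : Polynomial K :=
    ∑ n ∈ f.support, Polynomial.C (⟨f.coeff n, hfc n⟩ : K) * Polynomial.X ^ n with hp
  have hmap : p.map (algebraMap K Ω) = f := by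
    rw [hp, Polynomial.map_sum]
    conv_rhs => rw [f.as_sum_support]
    refine Finset.sum_congr rfl fun n _ => ?_
    rw [Polynomial.map_mul, Polynomial.map_C, Polynomial.map_pow, Polynomial.map_X,
      Polynomial.C_mul_X_pow_eq_monomial]
    rfl
  refine ⟨p, fun h0 => hf0 ?_, ?_⟩
  · rw [← hmap, h0, Polynomial.map_zero]
  · rw [Polynomial.aeval_def, ← Polynomial.eval_map, hmap]
    exact hfe

set_option synthInstance.maxHeartbeats 1000000 in
set_option maxHeartbeats 2000000 in
lemma tame_immediate (O : ValuationSubring Ω) (K M : Subfield Ω)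
    (halg : ∀ x : Ω, AlgOver K x) (ht : TameExt O K M) (him : IsImmediateV O K M) :
    M = K := by
  refine le_antisymm (fun x hxM => ?_) ht.1
  -- build the finite subextension E' = K(x)
  have hint : IsIntegral K x := isIntegral_of_algOver (halg x)
  haveI : FiniteDimensional K (IntermediateField.adjoin K ({x} : Set Ω)) :=
    IntermediateField.adjoin.finiteDimensional hint
  set L : IntermediateField K Ω := IntermediateField.adjoin K ({x} : Set Ω) with hL
  set E' : Subfield Ω := L.toSubfield with hE'
  have hKE' : K ≤ E' := fun k hk => L.algebraMap_mem ⟨k, hk⟩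
  have hxE' : x ∈ E' := IntermediateField.mem_adjoin_simple_self K x
  have hE'M : E' ≤ M := by
    have hle : L ≤ M.toIntermediateField (fun k => ht.1 k.2) := by
      rw [hL, IntermediateField.adjoin_le_iff]
      intro a ha
      rw [Set.mem_singleton_iff] at ha
      subst ha; exact hxM
    exact fun a ha => hle ha
  have hfin : FinExt hKE' := by
    letI := (Subfield.inclusion hKE').toAlgebra
    show Module.Finite K E'
    refine Module.Finite.of_surjective
      (M := L) (⟨⟨fun a => ⟨a.1, a.2⟩, fun a b => rfl⟩, fun c a => rfl⟩ : L →ₗ[K] E')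
      (fun e => ⟨⟨e.1, e.2⟩, rfl⟩)
  obtain ⟨hres, -, -, heq⟩ := ht.2 E' hKE' hE'M hfin
  -- the value group extension is trivial
  have hvg : vgrp O E' ≤ vgrp O K := by
    rintro g hg
    rw [vgrp, Subgroup.mem_map] at hg
    obtain ⟨u, hu, rfl⟩ := hg
    obtain ⟨w, rfl⟩ := hu
    set u : Ωˣ := Units.map E'.subtype.toMonoidHom w with hu
    have hxE : (u : Ω) ∈ M := hE'M w.val.2
    obtain ⟨y, hyK, hy0, hxy, hyx⟩ := him.1 (u : Ω) hxE u.ne_zero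
    set uy : Ωˣ := Units.mk0 y hy0 with huy
    have hmem : u⁻¹ * uy ∈ O.unitGroup := by
      rw [ValuationSubring.mem_unitGroup_iff]
      have h1 : O.valuation ((u⁻¹ * uy : Ωˣ) : Ω) ≤ 1 := by
        rw [ValuationSubring.valuation_le_one_iff]
        have : ((u⁻¹ * uy : Ωˣ) : Ω) = y * (u : Ω)⁻¹ := by
          simp [huy, mul_comm]
        rw [this]; exact hyx
      have h2 : O.valuation (((u⁻¹ * uy)⁻¹ : Ωˣ) : Ω) ≤ 1 := by
        rw [ValuationSubring.valuation_le_one_iff]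
        have : (((u⁻¹ * uy)⁻¹ : Ωˣ) : Ω) = (u : Ω) * y⁻¹ := by
          simp [huy, mul_comm]
        rw [this]; exact hxy
      refine le_antisymm h1 ?_
      have h3 : O.valuation ((u⁻¹ * uy : Ωˣ) : Ω) *
          O.valuation (((u⁻¹ * uy)⁻¹ : Ωˣ) : Ω) = 1 := by
        rw [← map_mul, ← Units.val_mul, mul_inv_cancel, Units.val_one, map_one]
      have h4 := mul_le_mul_right h2 (O.valuation ((u⁻¹ * uy : Ωˣ) : Ω))
      rw [h3, mul_one] at h4
      exact h4
    have hq : (QuotientGroup.mk' O.unitGroup) u = (QuotientGroup.mk' O.unitGroup) uy :=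
      (QuotientGroup.eq).mpr hmem
    rw [vgrp, Subgroup.mem_map]
    refine ⟨uy, ⟨Units.mk0 (⟨y, hyK⟩ : K) (fun h0 => hy0 (congrArg Subtype.val h0)), ?_⟩, hq.symm⟩
    exact Units.ext rfl
  have hrel : (vgrp O K).relIndex (vgrp O E') = 1 := Subgroup.relIndex_eq_one.mpr hvg
  -- the residue field extension is trivial
  have hres' : resSubfield O E' ≤ resSubfield O K := by
    rw [resSubfield, Subfield.closure_le]
    rintro ξ ⟨a, haE, rfl⟩
    obtain ⟨y, hyK, hsub, hnu⟩ := him.2 (a : Ω) (hE'M haE) a.2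
    have hyO : y ∈ O := by
      have := O.toSubring.sub_mem a.2 hsub
      rwa [sub_sub_cancel] at this
    have hsm : (a - ⟨y, hyO⟩ : O) ∈ IsLocalRing.maximalIdeal O := by
      rw [IsLocalRing.mem_maximalIdeal]
      intro hun
      rcases eq_or_ne ((a : Ω) - y) 0 with h0 | h0
      · have : (a - ⟨y, hyO⟩ : O) = 0 := Subtype.ext h0
        rw [this] at hun
        exact not_isUnit_zero hun
      · obtain ⟨c, hc⟩ := hun.exists_right_inv
        apply hnu h0
        have hc' : ((a : Ω) - y) * (c : Ω) = 1 := congrArg Subtype.val hc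
        have : ((a : Ω) - y)⁻¹ = (c : Ω) := (eq_inv_of_mul_eq_one_right hc').symm
        rw [this]; exact c.2
    have hab : IsLocalRing.residue O a = IsLocalRing.residue O ⟨y, hyO⟩ :=
      (Ideal.Quotient.mk_eq_mk_iff_sub_mem (I := IsLocalRing.maximalIdeal O)
        a ⟨y, hyO⟩).mpr hsm
    rw [hab]
    exact Subfield.subset_closure ⟨⟨y, hyO⟩, hyK, rfl⟩
  have hd1 : sdeg hres = 1 := sdeg_eq_one' hres hres'
  rw [hrel, hd1, mul_one] at heq
  -- degree one forces x ∈ K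
  letI := (Subfield.inclusion hKE').toAlgebra
  have h1 : Module.finrank K E' = 1 := heq
  have hbt := Subalgebra.bot_eq_top_of_finrank_eq_one h1
  have hxb : (⟨x, hxE'⟩ : E') ∈ (⊥ : Subalgebra K E') := by
    rw [hbt]; trivial
  rw [Algebra.mem_bot] at hxb
  obtain ⟨k, hk⟩ := hxb
  have : (k : Ω) = x := congrArg Subtype.val hk
  exact this ▸ k.2

end Aux15

/-- Every tame valued field is algebraically maximal, and every
separably tame valued field is separable-algebraically maximal.  Formulated inside
a fixed algebraic closure: Ω is algebraically closed and algebraic over the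
henselian subfield K, with valuation ring O; the (separable-)algebraic extensions
of K are exactly the (appropriate) subfields of Ω containing K. -/
theorem stmt15 {Ω : Type*} [Field Ω] [IsAlgClosed Ω]
    (O : ValuationSubring Ω) (K : Subfield Ω)
    (halg : ∀ x : Ω, AlgOver K x)
    (hhens : IsHenselianS O K) :
    -- if (K,v) is a tame field, then it is algebraically maximal:
    ((∀ M : Subfield Ω, K ≤ M → TameExt O K M) →
      ∀ M : Subfield Ω, K ≤ M → IsImmediateV O K M → M = K) ∧
    -- if (K,v) is a separably tame field, then it is separable-algebraically maximal:
    ((∀ M : Subfield Ω, K ≤ M → (∀ x ∈ M, SepAlgOver K x) → TameExt O K M) →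
      ∀ M : Subfield Ω, K ≤ M → (∀ x ∈ M, SepAlgOver K x) →
        IsImmediateV O K M → M = K) := by
  constructor
  · intro htame M hKM him
    exact tame_immediate O K M halg (htame M hKM) him
  · intro htame M hKM hsep him
    exact tame_immediate O K M halg (htame M hKM hsep) him
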